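/- Let B₁ = [[1,1],[0,1]] and B₂ = [[1,0],[1,1]], and for each k ≥ 1 consider the partition P^(k) of ℝ²₊ into the 2^k cones B_{m₁}⋯B_{m_k}(ℝ²₊) with m_i ∈ {1,2}. Let K be a compact subset of ℝ²₊ with Lebesgue measure μ. Then max over C ∈ P^(k) of μ(K ∩ C) tends to 0 as k → ∞. In fact, if K ⊆ {λ : λ₁ + λ₂ ≤ α}, then μ(K ∩ C) ≤ α²/(2(k+1)) for every C ∈ P^(k). -/

import Mathlib

open MeasureTheory Set Function

/-- The positive cone in the plane. -/
def R2plus : Set (Fin 2 → ℝ) := {v | 0 ≤ v 0 ∧ 0 ≤ v 1}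

/-- The elementary matrix `B₁ = [[1,1],[0,1]]`. -/
def Bone : Matrix (Fin 2) (Fin 2) ℝ := !![1, 1; 0, 1]

/-- The elementary matrix `B₂ = [[1,0],[1,1]]`. -/
def Btwo : Matrix (Fin 2) (Fin 2) ℝ := !![1, 0; 1, 1]

/-- The product `B_{m₁} ⋯ B_{m_k}` encoded by a list of booleans. -/
def coneMat (m : List Bool) : Matrix (Fin 2) (Fin 2) ℝ :=
  (m.map (fun b => if b then Bone else Btwo)).prod

/-- The cone `B_{m₁} ⋯ B_{m_k}(ℝ²₊)`. -/
def coneOf (m : List Bool) : Set (Fin 2 → ℝ) := (coneMat m).mulVec '' R2plus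

lemma coneMat_nil : coneMat [] = 1 := rfl

lemma coneMat_cons (b : Bool) (m : List Bool) :
    coneMat (b :: m) = (if b then Bone else Btwo) * coneMat m := by
  simp [coneMat]

lemma coneMat_det (m : List Bool) : (coneMat m).det = 1 := by
  induction m with
  | nil => simp [coneMat_nil]
  | cons b m ih =>
    rw [coneMat_cons, Matrix.det_mul, ih, mul_one]
    cases b <;> simp [Bone, Btwo, Matrix.det_fin_two_of]

lemma coneMat_inv (m : List Bool) :
    let M := coneMat m
    (∀ i j, 0 ≤ M i j) ∧ (1 ≤ M 0 0 + M 0 1) ∧ (1 ≤ M 1 0 + M 1 1) ∧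
      (1 ≤ M 0 0 + M 1 0) ∧ (1 ≤ M 0 1 + M 1 1) ∧
      ((m.length + 2 : ℝ) ≤ M 0 0 + M 0 1 + M 1 0 + M 1 1) := by
  induction m with
  | nil =>
    refine ⟨fun i j => ?_, ?_, ?_, ?_, ?_, ?_⟩
    · fin_cases i <;> fin_cases j <;> simp [coneMat_nil, Matrix.one_apply]
    all_goals simp [coneMat_nil, Matrix.one_apply]; try norm_num
  | cons b m ih =>
    obtain ⟨h0, h1, h2, h3, h4, h5⟩ := ih
    have n00 := h0 0 0; have n01 := h0 0 1; have n10 := h0 1 0; have n11 := h0 1 1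
    cases b
    · have hE : ∀ j, (coneMat (false :: m)) 0 j = coneMat m 0 j ∧
          (coneMat (false :: m)) 1 j = coneMat m 0 j + coneMat m 1 j := by
        intro j
        rw [coneMat_cons]
        constructor <;> simp [Btwo, Matrix.mul_apply, Fin.sum_univ_two]
      obtain ⟨e00, e10⟩ := hE 0
      obtain ⟨e01, e11⟩ := hE 1
      refine ⟨fun i j => ?_, ?_, ?_, ?_, ?_, ?_⟩
      · fin_cases i <;> fin_cases j <;>
          simp only [Fin.mk_zero, Fin.mk_one, Fin.isValue, e00, e01, e10, e11] <;> linarith [h0 0 0, h0 0 1, h0 1 0, h0 1 1]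
      all_goals simp only [Fin.mk_zero, Fin.mk_one, Fin.isValue, e00, e01, e10, e11, List.length_cons]
      all_goals push_cast
      all_goals linarith
    · have hE : ∀ j, (coneMat (true :: m)) 0 j = coneMat m 0 j + coneMat m 1 j ∧
          (coneMat (true :: m)) 1 j = coneMat m 1 j := by
        intro j
        rw [coneMat_cons]
        constructor <;> simp [Bone, Matrix.mul_apply, Fin.sum_univ_two]
      obtain ⟨e00, e10⟩ := hE 0
      obtain ⟨e01, e11⟩ := hE 1
      refine ⟨fun i j => ?_, ?_, ?_, ?_, ?_, ?_⟩
      · fin_cases i <;> fin_cases j <;>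
          simp only [Fin.mk_zero, Fin.mk_one, Fin.isValue, e00, e01, e10, e11] <;> linarith [h0 0 0, h0 0 1, h0 1 0, h0 1 1]
      all_goals simp only [Fin.mk_zero, Fin.mk_one, Fin.isValue, e00, e01, e10, e11, List.length_cons]
      all_goals push_cast
      all_goals linarith

lemma triangle_vol (a b α : ℝ) (ha : 0 < a) (hb : 0 < b) (hα : 0 ≤ α) :
    volume {p : ℝ × ℝ | p.1 ∈ Icc 0 (α/a) ∧ p.2 ∈ Icc 0 ((α - a*p.1)/b)}
      ≤ ENNReal.ofReal (α^2 / (2*(a*b))) := by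
  have hca : 0 ≤ α / a := div_nonneg hα ha.le
  set T : Set (ℝ × ℝ) := {p : ℝ × ℝ | p.1 ∈ Icc 0 (α/a) ∧ p.2 ∈ Icc 0 ((α - a*p.1)/b)}
  have hTm : MeasurableSet T := by
    have : T = {p : ℝ × ℝ | 0 ≤ p.1} ∩ {p | p.1 ≤ α/a} ∩ {p | 0 ≤ p.2} ∩
        {p | p.2 ≤ (α - a*p.1)/b} := by
      ext p; simp [T, Icc, and_assoc]
    rw [this]
    have h1 : IsClosed {p : ℝ × ℝ | 0 ≤ p.1} := isClosed_le continuous_const continuous_fst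
    have h2 : IsClosed {p : ℝ × ℝ | p.1 ≤ α/a} := isClosed_le continuous_fst continuous_const
    have h3 : IsClosed {p : ℝ × ℝ | 0 ≤ p.2} := isClosed_le continuous_const continuous_snd
    have h4 : IsClosed {p : ℝ × ℝ | p.2 ≤ (α - a*p.1)/b} :=
      isClosed_le continuous_snd (by fun_prop)
    exact (((h1.inter h2).inter h3).inter h4).measurableSet
  rw [Measure.volume_eq_prod, Measure.prod_apply hTm]
  have hslice : ∀ x : ℝ, volume (Prod.mk x ⁻¹' T)
      = Set.indicator (Icc 0 (α/a)) (fun x => ENNReal.ofReal ((α - a*x)/b)) x := by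
    intro x
    by_cases hx : x ∈ Icc 0 (α/a)
    · have : Prod.mk x ⁻¹' T = Icc 0 ((α - a*x)/b) := by
        rw [mem_Icc] at hx
        ext y
        simp only [mem_preimage, mem_setOf_eq, T, mem_Icc]
        exact ⟨fun h => h.2, fun h => ⟨⟨hx.1, hx.2⟩, h⟩⟩
      rw [this, Real.volume_Icc, Set.indicator_of_mem hx, sub_zero]
    · have : Prod.mk x ⁻¹' T = ∅ := by
        ext y
        simp only [mem_preimage, mem_setOf_eq, T, mem_Icc, mem_empty_iff_false, iff_false,
          not_and]
        intro h1
        exact (hx (mem_Icc.mpr h1)).elim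
      rw [this, Set.indicator_of_notMem hx]; simp
  rw [lintegral_congr hslice, lintegral_indicator measurableSet_Icc]
  have hint : IntegrableOn (fun x => (α - a*x)/b) (Icc 0 (α/a)) volume :=
    (Continuous.integrableOn_Icc (by fun_prop))
  have hnn : 0 ≤ᵐ[volume.restrict (Icc 0 (α/a))] fun x => (α - a*x)/b := by
    refine (ae_restrict_iff' measurableSet_Icc).2 (Filter.Eventually.of_forall fun x hx => ?_)
    have : a * x ≤ α := by
      have := hx.2
      calc a * x ≤ a * (α/a) := by nlinarith [hx.1]
        _ = α := by field_simp
    exact div_nonneg (by linarith) hb.le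
  rw [← ofReal_integral_eq_lintegral_ofReal hint hnn]
  apply ENNReal.ofReal_le_ofReal
  have hI : ∫ x in Icc (0:ℝ) (α/a), (α - a*x)/b = ∫ x in (0:ℝ)..(α/a), (α - a*x)/b := by
    rw [intervalIntegral.integral_of_le hca, MeasureTheory.integral_Icc_eq_integral_Ioc]
  rw [hI]
  have : ∫ x in (0:ℝ)..(α/a), (α - a*x)/b
      = (α * (α/a) - a * ((α/a)^2/2 - 0^2/2))/b := by
    rw [intervalIntegral.integral_div]
    congr 1
    rw [intervalIntegral.integral_sub (intervalIntegrable_const)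
        (by apply Continuous.intervalIntegrable; fun_prop),
      intervalIntegral.integral_const, intervalIntegral.integral_const_mul,
      integral_id]
    simp only [smul_eq_mul, sub_zero]
    ring
  rw [this]
  have heq : (α * (α/a) - a * ((α/a)^2/2 - 0^2/2))/b = α^2/(2*(a*b)) := by
    field_simp
    ring
  rw [heq]

lemma simplex_vol (a b α : ℝ) (ha : 0 < a) (hb : 0 < b) (hα : 0 ≤ α) :
    volume {x : Fin 2 → ℝ | 0 ≤ x 0 ∧ 0 ≤ x 1 ∧ a * x 0 + b * x 1 ≤ α}
      ≤ ENNReal.ofReal (α^2 / (2*(a*b))) := by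
  set T : Set (ℝ × ℝ) := {p : ℝ × ℝ | p.1 ∈ Icc 0 (α/a) ∧ p.2 ∈ Icc 0 ((α - a*p.1)/b)} with hT
  have hTm : MeasurableSet T := by
    have h1 : IsClosed {p : ℝ × ℝ | 0 ≤ p.1} := isClosed_le continuous_const continuous_fst
    have h2 : IsClosed {p : ℝ × ℝ | p.1 ≤ α/a} := isClosed_le continuous_fst continuous_const
    have h3 : IsClosed {p : ℝ × ℝ | 0 ≤ p.2} := isClosed_le continuous_const continuous_snd
    have h4 : IsClosed {p : ℝ × ℝ | p.2 ≤ (α - a*p.1)/b} :=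
      isClosed_le continuous_snd (by fun_prop)
    have : T = {p : ℝ × ℝ | 0 ≤ p.1} ∩ {p | p.1 ≤ α/a} ∩ {p | 0 ≤ p.2} ∩
        {p | p.2 ≤ (α - a*p.1)/b} := by
      ext p; simp [hT, Icc, and_assoc]
    rw [this]
    exact (((h1.inter h2).inter h3).inter h4).measurableSet
  have hsub : {x : Fin 2 → ℝ | 0 ≤ x 0 ∧ 0 ≤ x 1 ∧ a * x 0 + b * x 1 ≤ α}
      ⊆ (MeasurableEquiv.finTwoArrow : (Fin 2 → ℝ) ≃ᵐ ℝ × ℝ) ⁻¹' T := by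
    rintro x ⟨hx0, hx1, hxs⟩
    have hb1 : 0 ≤ b * x 1 := mul_nonneg hb.le hx1
    have ha0 : 0 ≤ a * x 0 := mul_nonneg ha.le hx0
    simp only [mem_preimage, hT, mem_setOf_eq, MeasurableEquiv.finTwoArrow_apply, mem_Icc]
    refine ⟨⟨hx0, (le_div_iff₀ ha).mpr ?_⟩, hx1, (le_div_iff₀ hb).mpr ?_⟩
    · linarith [mul_comm a (x 0)]
    · linarith [mul_comm b (x 1)]
  calc volume {x : Fin 2 → ℝ | 0 ≤ x 0 ∧ 0 ≤ x 1 ∧ a * x 0 + b * x 1 ≤ α}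
      ≤ volume ((MeasurableEquiv.finTwoArrow : (Fin 2 → ℝ) ≃ᵐ ℝ × ℝ) ⁻¹' T) :=
        measure_mono hsub
    _ = volume T := (volume_preserving_finTwoArrow ℝ).measure_preimage hTm.nullMeasurableSet
    _ ≤ ENNReal.ofReal (α^2 / (2*(a*b))) := triangle_vol a b α ha hb hα

theorem measure_inter_cone_small (K : Set (Fin 2 → ℝ)) (hK : IsCompact K)
    (hKsub : K ⊆ R2plus) (α : ℝ) (hα : 0 ≤ α)
    (hKα : K ⊆ {v | v 0 + v 1 ≤ α}) :
    (∀ m : List Bool,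
        volume (K ∩ coneOf m) ≤ ENNReal.ofReal (α ^ 2 / (2 * (m.length + 1)))) ∧
      (∀ ε : ℝ, 0 < ε → ∃ k₀ : ℕ, ∀ m : List Bool, k₀ ≤ m.length →
        volume (K ∩ coneOf m) ≤ ENNReal.ofReal ε) := by
  have main : ∀ m : List Bool,
      volume (K ∩ coneOf m) ≤ ENNReal.ofReal (α ^ 2 / (2 * (m.length + 1))) := by
    intro m
    obtain ⟨h0, h1, h2, h3, h4, h5⟩ := coneMat_inv m
    set M := coneMat m with hM
    set p := M 0 0 + M 1 0 with hp
    set q := M 0 1 + M 1 1 with hq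
    have hppos : (0:ℝ) < p := lt_of_lt_of_le one_pos h3
    have hqpos : (0:ℝ) < q := lt_of_lt_of_le one_pos h4
    set S : Set (Fin 2 → ℝ) := {x | 0 ≤ x 0 ∧ 0 ≤ x 1 ∧ p * x 0 + q * x 1 ≤ α} with hS
    have hsub : K ∩ coneOf m ⊆ (Matrix.toLin' M) '' S := by
      rintro v ⟨hvK, x, hxR, hxv⟩
      refine ⟨x, ⟨hxR.1, hxR.2, ?_⟩, by rw [Matrix.toLin'_apply]; exact hxv⟩
      have hv01 : v 0 + v 1 ≤ α := hKα hvK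
      have h0' : v 0 = M 0 0 * x 0 + M 0 1 * x 1 := by
        rw [← hxv]; simp [Matrix.mulVec, dotProduct, Fin.sum_univ_two]; rfl
      have h1' : v 1 = M 1 0 * x 0 + M 1 1 * x 1 := by
        rw [← hxv]; simp [Matrix.mulVec, dotProduct, Fin.sum_univ_two]; rfl
      rw [h0', h1'] at hv01
      rw [hp, hq]
      linarith
    have himg : volume ((Matrix.toLin' M) '' S) = volume S := by
      rw [Measure.addHaar_image_linearMap, LinearMap.det_toLin',
        show M.det = 1 from coneMat_det m]
      simp
    have hSvol : volume S ≤ ENNReal.ofReal (α^2 / (2*(p*q))) :=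
      simplex_vol p q α hppos hqpos hα
    have hpq : (m.length + 1 : ℝ) ≤ p * q := by
      have : (m.length + 2 : ℝ) ≤ p + q := by rw [hp, hq]; linarith
      nlinarith
    calc volume (K ∩ coneOf m) ≤ volume ((Matrix.toLin' M) '' S) := measure_mono hsub
      _ = volume S := himg
      _ ≤ ENNReal.ofReal (α^2 / (2*(p*q))) := hSvol
      _ ≤ ENNReal.ofReal (α ^ 2 / (2 * (m.length + 1))) := by
          apply ENNReal.ofReal_le_ofReal
          apply div_le_div_of_nonneg_left (by positivity) (by positivity)
          nlinarith
  refine ⟨main, fun ε hε => ?_⟩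
  obtain ⟨k₀, hk₀⟩ := exists_nat_ge (α^2 / (2*ε))
  refine ⟨k₀, fun m hm => le_trans (main m) (ENNReal.ofReal_le_ofReal ?_)⟩
  rw [div_le_iff₀ (by positivity)]
  have hlen : (k₀ : ℝ) ≤ m.length := by exact_mod_cast hm
  have : α^2 ≤ 2*ε*k₀ := by
    rw [div_le_iff₀ (by positivity)] at hk₀
    linarith
  nlinarith
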